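/- Suppose C(K) = e^{-R} ∫_K^∞ (x − K) p(x) dx for a continuous probability density p on (0,∞) with finite mean. Then C is twice differentiable on (0,∞) and C''(K) = e^{-R} p(K) for all K > 0 (the Breeden–Litzenberger formula). -/

import Mathlib

open MeasureTheory

/-- Breeden–Litzenberger: if C(K) = e^{-R} ∫_K^∞ (x−K) p(x) dx for a continuous probability
density p on (0,∞) with finite mean, then C is twice differentiable on (0,∞) and
C''(K) = e^{-R} p(K) for all K > 0. -/
theorem breeden_litzenberger
    (p : ℝ → ℝ) (R : ℝ) (C : ℝ → ℝ)
    (hcont : ContinuousOn p (Set.Ioi 0))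
    (hnonneg : ∀ x ∈ Set.Ioi (0:ℝ), 0 ≤ p x)
    (hint : IntegrableOn p (Set.Ioi 0))
    (hmean : IntegrableOn (fun x => x * p x) (Set.Ioi 0))
    (hprob : (∫ x in Set.Ioi (0:ℝ), p x) = 1)
    (hC : ∀ K, C K = Real.exp (-R) * ∫ x in Set.Ioi K, (x - K) * p x) :
    ∀ K : ℝ, 0 < K →
      DifferentiableAt ℝ C K ∧ DifferentiableAt ℝ (deriv C) K ∧
        deriv (deriv C) K = Real.exp (-R) * p K := by
  intro K hK
  have hopen : IsOpen (Set.Ioi (0:ℝ)) := isOpen_Ioi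
  set G0 := ∫ x in Set.Ioi (0:ℝ), p x with hG0
  set H0 := ∫ x in Set.Ioi (0:ℝ), x * p x with hH0
  -- FTC helper
  have hderiv_int : ∀ (f : ℝ → ℝ), ContinuousOn f (Set.Ioi 0) →
      IntegrableOn f (Set.Ioi 0) → ∀ y, 0 < y →
      HasDerivAt (fun u => ∫ t in (0:ℝ)..u, f t) (f y) y := by
    intro f hc hi y hy
    have hiy : IntervalIntegrable f volume 0 y :=
      (intervalIntegrable_iff_integrableOn_Ioc_of_le hy.le).2
        (hi.mono_set Set.Ioc_subset_Ioi_self)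
    exact intervalIntegral.integral_hasDerivAt_right hiy
      (hc.stronglyMeasurableAtFilter hopen y hy)
      (hc.continuousAt (hopen.mem_nhds hy))
  -- splitting helper
  have hsplit : ∀ (f : ℝ → ℝ), IntegrableOn f (Set.Ioi 0) → ∀ y, 0 < y →
      (∫ x in Set.Ioi y, f x) = (∫ x in Set.Ioi 0, f x) - ∫ t in (0:ℝ)..y, f t := by
    intro f hi y hy
    rw [intervalIntegral.integral_of_le hy.le]
    have h := setIntegral_union (Set.Ioc_disjoint_Ioi le_rfl) measurableSet_Ioi
      (hi.mono_set Set.Ioc_subset_Ioi_self)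
      (hi.mono_set (Set.Ioi_subset_Ioi hy.le)) (f := f)
    rw [Set.Ioc_union_Ioi_eq_Ioi hy.le] at h
    linarith
  -- C agrees with an explicit function on Ioi 0
  have hCeq : Set.EqOn C (fun y => Real.exp (-R) * ((H0 - ∫ t in (0:ℝ)..y, t * p t)
      - y * (G0 - ∫ t in (0:ℝ)..y, p t))) (Set.Ioi 0) := by
    intro y hy
    have hy : (0:ℝ) < y := hy
    rw [hC y]
    have h1 : IntegrableOn (fun x => x * p x) (Set.Ioi y) :=
      hmean.mono_set (Set.Ioi_subset_Ioi hy.le)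
    have h2 : IntegrableOn p (Set.Ioi y) :=
      hint.mono_set (Set.Ioi_subset_Ioi hy.le)
    have key : (∫ x in Set.Ioi y, (x - y) * p x)
        = (∫ x in Set.Ioi y, x * p x) - y * ∫ x in Set.Ioi y, p x := by
      rw [← integral_const_mul, ← integral_sub h1 (h2.const_mul y)]
      congr 1
      ext x
      ring
    rw [key, hsplit _ hmean y hy, hsplit _ hint y hy]
  -- derivative of the explicit function
  have hφ : ∀ y, 0 < y → HasDerivAt (fun y => Real.exp (-R) * ((H0 - ∫ t in (0:ℝ)..y, t * p t)
      - y * (G0 - ∫ t in (0:ℝ)..y, p t)))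
      (-(Real.exp (-R)) * (G0 - ∫ t in (0:ℝ)..y, p t)) y := by
    intro y hy
    have d1 : HasDerivAt (fun u => ∫ t in (0:ℝ)..u, t * p t) (y * p y) y :=
      hderiv_int _ (continuousOn_id.mul hcont) hmean y hy
    have d2 : HasDerivAt (fun u => ∫ t in (0:ℝ)..u, p t) (p y) y :=
      hderiv_int _ hcont hint y hy
    have h := (((hasDerivAt_const y H0).sub d1).sub
      ((hasDerivAt_id y).mul ((hasDerivAt_const y G0).sub d2))).const_mul (Real.exp (-R))
    convert h using 1
    any_goals rfl
    simp only [id_eq, Pi.sub_apply]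
    ring
  have hCd : ∀ y, 0 < y →
      HasDerivAt C (-(Real.exp (-R)) * (G0 - ∫ t in (0:ℝ)..y, p t)) y := by
    intro y hy
    exact (hφ y hy).congr_of_eventuallyEq
      (hCeq.eventuallyEq_of_mem (hopen.mem_nhds hy))
  have hmem : Set.Ioi (0:ℝ) ∈ nhds K := hopen.mem_nhds hK
  have hd2 : HasDerivAt (fun y => -(Real.exp (-R)) * (G0 - ∫ t in (0:ℝ)..y, p t))
      (Real.exp (-R) * p K) K := by
    have d2 : HasDerivAt (fun u => ∫ t in (0:ℝ)..u, p t) (p K) K :=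
      hderiv_int _ hcont hint K hK
    have h := ((hasDerivAt_const K G0).sub d2).const_mul (-(Real.exp (-R)))
    convert h using 1
    any_goals rfl
    ring
  have heq : deriv C =ᶠ[nhds K]
      fun y => -(Real.exp (-R)) * (G0 - ∫ t in (0:ℝ)..y, p t) := by
    filter_upwards [hmem] with y hy
    exact (hCd y hy).deriv
  refine ⟨(hCd K hK).differentiableAt, ?_, ?_⟩
  · exact heq.differentiableAt_iff.2 hd2.differentiableAt
  · rw [heq.deriv_eq, hd2.deriv]
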